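/- Let ν be a probability measure on (0,∞), let η ∈ ℝ^d with η ≠ 0, φ ∈ ℂ^d with |φ| < M for some M < ∞, and set z(x) = (1/2)x²⟨η,η⟩ + (1/2)⟨φ,φ⟩ + x⟨η,φ⟩ (bilinear extension of the real inner product to ℂ^d, no conjugation). Then ∫_ℝ |∫_0^∞ e^{−r z(x)} dν(r)| dx ≤ √(2π/⟨η,η⟩) ∫_0^∞ r^{−1/2} e^{M² r/2} dν(r), provided the right-hand side is finite. -/

import Mathlib

open MeasureTheory
open scoped RealInnerProductSpace

lemma gauss_quad_eq (p q s : ℝ) (hp : 0 < p) :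
    ∫ x : ℝ, Real.exp (-p * x ^ 2 + q * x + s)
      = Real.sqrt (Real.pi / p) * Real.exp (q ^ 2 / (4 * p) + s) := by
  have h : ∀ x : ℝ, -p * x ^ 2 + q * x + s
      = -p * (x - q / (2 * p)) ^ 2 + (q ^ 2 / (4 * p) + s) := by
    intro x; field_simp; ring
  simp_rw [h, Real.exp_add, integral_mul_const]
  rw [integral_sub_right_eq_self (fun x : ℝ => Real.exp (-p * x ^ 2)) (q / (2 * p)),
    integral_gaussian]

lemma gauss_quad_int (p q s : ℝ) (hp : 0 < p) :
    Integrable (fun x : ℝ => Real.exp (-p * x ^ 2 + q * x + s)) := by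
  have h : (fun x : ℝ => Real.exp (-p * x ^ 2 + q * x + s))
      = fun x : ℝ => Real.exp (-p * (x - q / (2 * p)) ^ 2) * Real.exp (q ^ 2 / (4 * p) + s) := by
    funext x
    rw [← Real.exp_add]
    congr 1
    field_simp; ring
  rw [h]
  exact ((integrable_exp_neg_mul_sq hp).comp_sub_right _).mul_const _

lemma norm_exp_eq (r x a b2 t1 c t2 : ℝ) :
    ‖Complex.exp (-(r : ℂ) *
        ((x ^ 2 * a / 2 : ℝ) + (((b2 : ℝ) : ℂ) + 2 * (t1 : ℝ) * Complex.I) / 2 +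
          (x : ℂ) * (((c : ℝ) : ℂ) + ((t2 : ℝ) : ℂ) * Complex.I)))‖
      = Real.exp (-(r * (x ^ 2 * a / 2 + b2 / 2 + x * c))) := by
  rw [Complex.norm_exp]
  congr 1
  simp [Complex.add_re, Complex.mul_re, Complex.div_re, Complex.normSq, ← Complex.ofReal_pow]

/-- Let `ν` be a probability measure on `(0,∞)`, `η ∈ ℝ^d` nonzero, `φ = φ₁ + iφ₂ ∈ ℂ^d`
with `|φ| < M`, and `z(x) = (1/2)x²⟨η,η⟩ + (1/2)⟨φ,φ⟩ + x⟨η,φ⟩` (bilinear extension of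
the inner product). Then
`∫_ℝ |∫₀^∞ e^{−r z(x)} dν(r)| dx ≤ √(2π/⟨η,η⟩) ∫₀^∞ r^{−1/2} e^{M²r/2} dν(r)`,
provided the right-hand side is finite. -/
theorem donsker_delta_bound {d : ℕ} (ν : Measure ℝ) [IsProbabilityMeasure ν]
    (hν : ν (Set.Iic 0) = 0)
    (η φ₁ φ₂ : EuclideanSpace ℝ (Fin d)) (hη : η ≠ 0)
    (M : ℝ) (hM : Real.sqrt (‖φ₁‖ ^ 2 + ‖φ₂‖ ^ 2) < M)
    (hfin : Integrable (fun r : ℝ => r ^ (-(1 / 2) : ℝ) * Real.exp (M ^ 2 * r / 2)) ν) :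
    (∫⁻ x : ℝ, ENNReal.ofReal
        ‖∫ r, Complex.exp (-(r : ℂ) *
            ((x ^ 2 * ⟪η, η⟫ / 2 : ℝ) +
              (((‖φ₁‖ ^ 2 - ‖φ₂‖ ^ 2 : ℝ) : ℂ) + 2 * (⟪φ₁, φ₂⟫ : ℝ) * Complex.I) / 2 +
              (x : ℂ) * (((⟪η, φ₁⟫ : ℝ) : ℂ) + ((⟪η, φ₂⟫ : ℝ) : ℂ) * Complex.I))) ∂ν‖) ≤
      ENNReal.ofReal (Real.sqrt (2 * Real.pi / ⟪η, η⟫) *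
        ∫ r, r ^ (-(1 / 2) : ℝ) * Real.exp (M ^ 2 * r / 2) ∂ν) := by
  have ha : (0 : ℝ) < ⟪η, η⟫ := by
    rw [real_inner_self_eq_norm_sq]
    exact pow_pos (norm_pos_iff.mpr hη) 2
  set a : ℝ := ⟪η, η⟫ with ha_def
  set c : ℝ := ⟪η, φ₁⟫ with hc_def
  set b2 : ℝ := ‖φ₁‖ ^ 2 - ‖φ₂‖ ^ 2 with hb2_def
  -- basic bounds
  have hM0 : 0 < M := lt_of_le_of_lt (Real.sqrt_nonneg _) hM
  have hM' : ‖φ₁‖ ^ 2 + ‖φ₂‖ ^ 2 < M ^ 2 := by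
    nlinarith [Real.sq_sqrt (show (0:ℝ) ≤ ‖φ₁‖ ^ 2 + ‖φ₂‖ ^ 2 by positivity),
      Real.sqrt_nonneg (‖φ₁‖ ^ 2 + ‖φ₂‖ ^ 2)]
  have hcs : c ^ 2 ≤ a * ‖φ₁‖ ^ 2 := by
    have h1 : |⟪η, φ₁⟫| ≤ ‖η‖ * ‖φ₁‖ := abs_real_inner_le_norm η φ₁
    have h2 : a = ‖η‖ ^ 2 := real_inner_self_eq_norm_sq η
    nlinarith [abs_nonneg (⟪η, φ₁⟫ : ℝ), sq_abs (⟪η, φ₁⟫ : ℝ)]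
  have key : c ^ 2 / (2 * a) - b2 / 2 ≤ M ^ 2 / 2 := by
    have h3 : c ^ 2 / (2 * a) ≤ ‖φ₁‖ ^ 2 / 2 := by
      rw [div_le_div_iff₀ (by positivity) (by norm_num)]
      nlinarith
    rw [hb2_def]
    nlinarith
  -- a.e. positivity of r
  have hae : ∀ᵐ r ∂ν, 0 < r := by
    rw [ae_iff]
    have : {r : ℝ | ¬ 0 < r} = Set.Iic 0 := by ext r; simp [not_lt]
    rw [this]; exact hν
  -- the per-r Gaussian bound
  have key_r : ∀ r : ℝ, 0 < r →
      (∫⁻ x : ℝ, ENNReal.ofReal (Real.exp (-(r * (x ^ 2 * a / 2 + b2 / 2 + x * c)))))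
        ≤ ENNReal.ofReal (Real.sqrt (2 * Real.pi / a) *
            (r ^ (-(1 / 2) : ℝ) * Real.exp (M ^ 2 * r / 2))) := by
    intro r hr
    have hp : 0 < r * a / 2 := by positivity
    have hexp : ∀ x : ℝ, -(r * (x ^ 2 * a / 2 + b2 / 2 + x * c))
        = -(r * a / 2) * x ^ 2 + (-(r * c)) * x + (-(r * b2 / 2)) := by
      intro x; ring
    simp_rw [hexp]
    rw [← ofReal_integral_eq_lintegral_ofReal (gauss_quad_int _ _ _ hp)
      (Filter.Eventually.of_forall fun x => (Real.exp_pos _).le)]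
    rw [gauss_quad_eq _ _ _ hp]
    apply ENNReal.ofReal_le_ofReal
    have e1 : Real.sqrt (Real.pi / (r * a / 2))
        = Real.sqrt (2 * Real.pi / a) * r ^ (-(1 / 2) : ℝ) := by
      have h : Real.pi / (r * a / 2) = (2 * Real.pi / a) * r⁻¹ := by
        field_simp
      rw [h, Real.sqrt_mul (by positivity), Real.sqrt_inv]
      congr 1
      rw [Real.sqrt_eq_rpow, ← Real.rpow_neg hr.le]
    have e2 : (-(r * c)) ^ 2 / (4 * (r * a / 2)) + (-(r * b2 / 2))
        = r * (c ^ 2 / (2 * a) - b2 / 2) := by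
      field_simp
      ring
    rw [e1, e2, mul_assoc]
    gcongr
    nlinarith [mul_le_mul_of_nonneg_left key hr.le]
  -- main chain
  calc (∫⁻ x : ℝ, ENNReal.ofReal
        ‖∫ r, Complex.exp (-(r : ℂ) *
            ((x ^ 2 * a / 2 : ℝ) +
              (((b2 : ℝ) : ℂ) + 2 * (⟪φ₁, φ₂⟫ : ℝ) * Complex.I) / 2 +
              (x : ℂ) * (((c : ℝ) : ℂ) + ((⟪η, φ₂⟫ : ℝ) : ℂ) * Complex.I))) ∂ν‖)
      ≤ ∫⁻ x : ℝ, ∫⁻ r, ENNReal.ofReal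
          (Real.exp (-(r * (x ^ 2 * a / 2 + b2 / 2 + x * c)))) ∂ν := by
        refine lintegral_mono fun x => ?_
        rw [ofReal_norm_eq_enorm]
        refine le_trans (enorm_integral_le_lintegral_enorm _) (le_of_eq ?_)
        refine lintegral_congr fun r => ?_
        rw [← ofReal_norm_eq_enorm, norm_exp_eq]
    _ = ∫⁻ r, (∫⁻ x : ℝ, ENNReal.ofReal
          (Real.exp (-(r * (x ^ 2 * a / 2 + b2 / 2 + x * c))))) ∂ν := by
        refine lintegral_lintegral_swap ?_
        have hcont : Continuous fun z : ℝ × ℝ =>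
            ENNReal.ofReal (Real.exp (-(z.2 * (z.1 ^ 2 * a / 2 + b2 / 2 + z.1 * c)))) :=
          ENNReal.continuous_ofReal.comp (Real.continuous_exp.comp (by fun_prop))
        exact hcont.aemeasurable
    _ ≤ ∫⁻ r, ENNReal.ofReal (Real.sqrt (2 * Real.pi / a) *
          (r ^ (-(1 / 2) : ℝ) * Real.exp (M ^ 2 * r / 2))) ∂ν :=
        lintegral_mono_ae (hae.mono fun r hr => key_r r hr)
    _ = ENNReal.ofReal (Real.sqrt (2 * Real.pi / a) *
          ∫ r, r ^ (-(1 / 2) : ℝ) * Real.exp (M ^ 2 * r / 2) ∂ν) := by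
        rw [← ofReal_integral_eq_lintegral_ofReal (hfin.const_mul _)
          (hae.mono fun r hr => by positivity), integral_const_mul]
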